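/- Let χ̆ : [0,∞) → ℝ be absolutely continuous with χ̆' ∈ L¹(0,∞) (i.e. χ̆ ∈ W¹₁(0,∞)), and suppose χ̆(0) = 1, χ̆(ρ) ≥ 0 for all ρ ≥ 0, χ̆ is non-increasing on [0,∞), and ∫₀^∞ ρ χ̆(ρ) dρ < ∞. Then χ is in the class X¹₊, that is, σ_χ(ω) > 0 for every ω ∈ ℝ: explicitly, (a) ∫₀^∞ ρ χ̆(ρ) dρ > 0, and (b) for every ω ≠ 0 the integral ∫₀^∞ χ̆(ρ) sin(ρω) dρ converges absolutely and (1/ω) ∫₀^∞ χ̆(ρ) sin(ρω) dρ > 0. -/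

import Mathlib

open MeasureTheory

noncomputable section

/-- a non-negative, non-increasing cut-off profile `χ̆ ∈ W¹₁(0,∞)`
with `χ̆(0) = 1` and `ρχ̆(ρ) ∈ L¹(0,∞)` belongs to the class `X¹₊`:
(a) `∫₀^∞ ρχ̆(ρ) dρ > 0`, and (b) for every `ω ≠ 0` the integral
`∫₀^∞ χ̆(ρ) sin(ρω) dρ` converges absolutely and `(1/ω)∫₀^∞ χ̆(ρ) sin(ρω) dρ > 0`.
(Absolute continuity with `L¹` derivative is encoded by the existence of an
integrable `g` with `χ̆(x) = χ̆(0) + ∫₀^x g`.) -/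
theorem stmt18 (χ : ℝ → ℝ)
    (hW : ∃ g : ℝ → ℝ, IntegrableOn g (Set.Ioi (0 : ℝ)) ∧
      ∀ x : ℝ, 0 ≤ x → χ x = χ 0 + ∫ t in (0 : ℝ)..x, g t)
    (h0 : χ 0 = 1)
    (hnn : ∀ ρ : ℝ, 0 ≤ ρ → 0 ≤ χ ρ)
    (hmono : AntitoneOn χ (Set.Ici (0 : ℝ)))
    (hint : IntegrableOn (fun ρ => ρ * χ ρ) (Set.Ioi (0 : ℝ))) :
    (0 < ∫ ρ in Set.Ioi (0 : ℝ), ρ * χ ρ) ∧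
    ∀ ω : ℝ, ω ≠ 0 →
      IntegrableOn (fun ρ => χ ρ * Real.sin (ρ * ω)) (Set.Ioi (0 : ℝ)) ∧
      0 < (1 / ω) * ∫ ρ in Set.Ioi (0 : ℝ), χ ρ * Real.sin (ρ * ω) := by
  obtain ⟨g, hg, hgeq⟩ := hW
  -- interval integrability of g on [0, x]
  have hii : ∀ x : ℝ, 0 ≤ x → IntervalIntegrable g volume 0 x := by
    intro x hx
    rw [intervalIntegrable_iff_integrableOn_Ioc_of_le hx]
    exact hg.mono_set Set.Ioc_subset_Ioi_self
  -- interval integral of g over [a,b] equals χ b - χ a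
  have hsub : ∀ a b : ℝ, 0 ≤ a → a ≤ b → ∫ t in a..b, g t = χ b - χ a := by
    intro a b ha hab
    have h1 := hgeq a ha
    have h2 := hgeq b (ha.trans hab)
    have h3 := intervalIntegral.integral_interval_sub_left (hii b (ha.trans hab)) (hii a ha)
    rw [h0] at h1 h2
    rw [← h3, h1, h2]; ring
  -- χ ≤ 1 on [0,∞)
  have hle1 : ∀ ρ : ℝ, 0 ≤ ρ → χ ρ ≤ 1 := by
    intro ρ hρ
    have := hmono (Set.self_mem_Ici) hρ hρ
    rwa [h0] at this
  -- χ is a.e. strongly measurable on (0,∞)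
  have hχm : AEStronglyMeasurable χ (volume.restrict (Set.Ioi (0:ℝ))) := by
    have h1 : AEStronglyMeasurable (fun ρ : ℝ => (ρ * χ ρ) * ρ⁻¹)
        (volume.restrict (Set.Ioi (0:ℝ))) :=
      hint.aestronglyMeasurable.mul (measurable_inv.aestronglyMeasurable)
    refine h1.congr ?_
    filter_upwards [ae_restrict_mem measurableSet_Ioi] with ρ hρ
    have : (ρ:ℝ) ≠ 0 := ne_of_gt hρ
    field_simp
  -- a δ > 0 below which χ ≥ 1/2
  have hδ : ∃ δ : ℝ, 0 < δ ∧ ∀ ρ : ℝ, 0 < ρ → ρ ≤ δ → 1/2 ≤ χ ρ := by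
    have hIcc : IntegrableOn g (Set.Icc (0:ℝ) 1) := by
      have h1 : IntegrableOn g (Set.Ioc (0:ℝ) 1) := hg.mono_set Set.Ioc_subset_Ioi_self
      exact IntegrableOn.congr_set_ae h1 (MeasureTheory.Ioc_ae_eq_Icc (μ := volume)).symm
    have hcont := intervalIntegral.continuousOn_primitive (f := g) (μ := volume)
      (a := 0) (b := 1) hIcc
    have hc0 : ContinuousWithinAt (fun x => ∫ t in Set.Ioc (0:ℝ) x, g t)
        (Set.Icc (0:ℝ) 1) 0 := hcont 0 ⟨le_rfl, zero_le_one⟩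
    have hF0 : (∫ t in Set.Ioc (0:ℝ) (0:ℝ), g t) = 0 := by simp
    have h2 : Filter.Tendsto (fun x => ∫ t in Set.Ioc (0:ℝ) x, g t)
        (nhdsWithin 0 (Set.Icc (0:ℝ) 1)) (nhds 0) := by
      have h2' := hc0
      unfold ContinuousWithinAt at h2'
      rwa [show (fun x => ∫ t in Set.Ioc (0:ℝ) x, g t) 0 = 0 by simp] at h2'
    have hev : ∀ᶠ x in nhdsWithin (0:ℝ) (Set.Icc (0:ℝ) 1),
        (fun x => ∫ t in Set.Ioc (0:ℝ) x, g t) x ∈ Metric.ball (0:ℝ) (1/2) :=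
      h2 (Metric.ball_mem_nhds 0 (by norm_num))
    have hle : nhdsWithin (0:ℝ) (Set.Ioc (0:ℝ) 1) ≤ nhdsWithin 0 (Set.Icc (0:ℝ) 1) :=
      nhdsWithin_mono 0 Set.Ioc_subset_Icc_self
    have hne : (nhdsWithin (0:ℝ) (Set.Ioc (0:ℝ) 1)).NeBot := by
      refine mem_closure_iff_nhdsWithin_neBot.mp ?_
      rw [closure_Ioc (zero_ne_one)]
      exact ⟨le_rfl, zero_le_one⟩
    have hev2 : ∀ᶠ x in nhdsWithin (0:ℝ) (Set.Ioc (0:ℝ) 1),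
        (∫ t in Set.Ioc (0:ℝ) x, g t) ∈ Metric.ball (0:ℝ) (1/2) := hle hev
    obtain ⟨δ, hδ1, hδ2⟩ := (hev2.and eventually_mem_nhdsWithin).exists
    refine ⟨δ, hδ2.1, ?_⟩
    have hχδ : 1/2 ≤ χ δ := by
      have h3 : |∫ t in Set.Ioc (0:ℝ) δ, g t| < 1/2 := by
        simpa [Real.dist_eq] using hδ1
      have h4 : χ δ = 1 + ∫ t in Set.Ioc (0:ℝ) δ, g t := by
        rw [hgeq δ (le_of_lt hδ2.1), h0, intervalIntegral.integral_of_le (le_of_lt hδ2.1)]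
      rw [h4]
      have := abs_lt.mp h3
      linarith [this.1]
    intro ρ hρ0 hρδ
    exact le_trans hχδ (hmono (le_of_lt hρ0) (le_of_lt hδ2.1) hρδ)
  -- part (a)
  have partA : 0 < ∫ ρ in Set.Ioi (0 : ℝ), ρ * χ ρ := by
    obtain ⟨δ, hδ0, hδχ⟩ := hδ
    have hnn' : 0 ≤ᵐ[volume.restrict (Set.Ioi (0:ℝ))] fun ρ => ρ * χ ρ := by
      filter_upwards [ae_restrict_mem measurableSet_Ioi] with ρ hρ
      exact mul_nonneg (le_of_lt hρ) (hnn ρ (le_of_lt hρ))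
    rw [setIntegral_pos_iff_support_of_nonneg_ae hnn' hint]
    have hsub2 : Set.Ioo 0 δ ⊆ (Function.support fun ρ => ρ * χ ρ) ∩ Set.Ioi 0 := by
      intro ρ hρ
      have h1 : (0:ℝ) < ρ := hρ.1
      have h2 : 1/2 ≤ χ ρ := hδχ ρ h1 (le_of_lt hρ.2)
      constructor
      · have : 0 < ρ * χ ρ := mul_pos h1 (by linarith)
        exact ne_of_gt this
      · exact h1
    calc (0:ENNReal) < volume (Set.Ioo (0:ℝ) δ) := by
          rw [Real.volume_Ioo]; simpa using hδ0
      _ ≤ _ := measure_mono hsub2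
  refine ⟨partA, ?_⟩
  -- limit of χ at infinity is 0, and ∫_{Ioi ρ} g = -χ ρ
  have htend : Filter.Tendsto (fun x => ∫ t in (0:ℝ)..x, g t) Filter.atTop
      (nhds (∫ t in Set.Ioi (0:ℝ), g t)) :=
    intervalIntegral_tendsto_integral_Ioi 0 hg Filter.tendsto_id
  have hχtend : Filter.Tendsto χ Filter.atTop (nhds (1 + ∫ t in Set.Ioi (0:ℝ), g t)) := by
    refine ((htend.const_add 1).congr' ?_)
    filter_upwards [Filter.eventually_ge_atTop (0:ℝ)] with x hx
    rw [hgeq x hx, h0]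
  have hI : (∫ t in Set.Ioi (0:ℝ), g t) = -1 := by
    set I := ∫ t in Set.Ioi (0:ℝ), g t with hIdef
    have hL0 : 0 ≤ 1 + I :=
      ge_of_tendsto hχtend ((Filter.eventually_ge_atTop (0:ℝ)).mono fun x hx => hnn x hx)
    have hL1 : 1 + I ≤ 0 := by
      by_contra hc
      push_neg at hc
      have hev : ∀ᶠ x in Filter.atTop, (1 + I) / 2 < χ x :=
        hχtend.eventually (eventually_gt_nhds (by linarith))
      obtain ⟨M, hM⟩ := Filter.eventually_atTop.mp hev
      set M' := max M 1 with hM'def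
      have hM1 : (1:ℝ) ≤ M' := le_max_right M 1
      have hM0 : (0:ℝ) < M' := by linarith
      have hIntM : IntegrableOn (fun ρ => ρ * χ ρ) (Set.Ioi M') :=
        hint.mono_set (Set.Ioi_subset_Ioi (le_of_lt hM0))
      have hconst : IntegrableOn (fun _ : ℝ => M' * ((1 + I) / 2)) (Set.Ioi M') := by
        refine Integrable.mono' hIntM aestronglyMeasurable_const ?_
        filter_upwards [ae_restrict_mem measurableSet_Ioi] with ρ hρ
        have h1 : M' < ρ := hρ
        have h2 : (1 + I) / 2 < χ ρ := hM ρ (le_of_lt (lt_of_le_of_lt (le_max_left M 1) h1))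
        have h3 : 0 < (1 + I) / 2 := by linarith
        rw [Real.norm_eq_abs, abs_of_nonneg (by positivity)]
        have : M' * ((1 + I) / 2) ≤ ρ * ((1 + I) / 2) :=
          mul_le_mul_of_nonneg_right (le_of_lt h1) (le_of_lt h3)
        calc M' * ((1 + I) / 2) ≤ ρ * ((1 + I) / 2) := this
          _ ≤ ρ * χ ρ := mul_le_mul_of_nonneg_left (le_of_lt h2) (by linarith)
      rcases (integrableOn_const_iff (C := M' * ((1 + I) / 2))).mp hconst with h | h
      · have : 0 < M' * ((1 + I) / 2) := by positivity
        rw [enorm_eq_zero.mp h] at this; exact lt_irrefl 0 this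
      · rw [Real.volume_Ioi] at h; exact (lt_irrefl _ h).elim
    linarith

  rw [hI] at hχtend
  simp only [add_neg_cancel] at hχtend
  have hIoiρ : ∀ ρ : ℝ, 0 ≤ ρ → (∫ t in Set.Ioi ρ, g t) = -χ ρ := by
    intro ρ hρ
    have hu : Set.Ioc 0 ρ ∪ Set.Ioi ρ = Set.Ioi 0 := Set.Ioc_union_Ioi_eq_Ioi hρ
    have hd : Disjoint (Set.Ioc (0:ℝ) ρ) (Set.Ioi ρ) := Set.Ioc_disjoint_Ioi le_rfl
    have h1 : IntegrableOn g (Set.Ioc 0 ρ) := hg.mono_set Set.Ioc_subset_Ioi_self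
    have h2 : IntegrableOn g (Set.Ioi ρ) := hg.mono_set (Set.Ioi_subset_Ioi hρ)
    have h3 := setIntegral_union hd measurableSet_Ioi h1 h2 (f := g) (μ := volume)
    rw [hu, hI] at h3
    have h4 : (∫ t in Set.Ioc (0:ℝ) ρ, g t) = χ ρ - 1 := by
      rw [← intervalIntegral.integral_of_le hρ, hsub 0 ρ le_rfl hρ, h0]
    rw [h4] at h3; linarith
  -- g ≤ 0 a.e. on (0,∞)
  have hgle : ∀ᵐ t ∂(volume.restrict (Set.Ioi (0:ℝ))), g t ≤ 0 := by
    set g0 : ℝ → ℝ := (Set.Ioi (0:ℝ)).indicator g with hg0def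
    have hg0int : Integrable g0 volume := (integrable_indicator_iff measurableSet_Ioi).mpr hg
    have hloc : MeasureTheory.LocallyIntegrable g0 volume := hg0int.locallyIntegrable
    have hae := IsUnifLocDoublingMeasure.ae_tendsto_average (μ := (volume : Measure ℝ)) hloc 1
    rw [ae_restrict_iff' measurableSet_Ioi]
    filter_upwards [hae] with x hx hxpos
    have hxpos' : (0:ℝ) < x := hxpos
    -- the radii sequence
    have hδpos : ∀ j : ℕ, 0 < x / (j + 2) := fun j => by positivity
    have hδlt : ∀ j : ℕ, x / (j + 2) < x := fun j => by
      rw [div_lt_iff₀ (by positivity)]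
      nlinarith [Nat.cast_nonneg (α := ℝ) j]
    have hδlim : Filter.Tendsto (fun j : ℕ => x / ((j:ℝ) + 2)) Filter.atTop
        (nhdsWithin 0 (Set.Ioi 0)) := by
      refine tendsto_nhdsWithin_of_tendsto_nhds_of_eventually_within _ ?_
        (Filter.Eventually.of_forall fun j => hδpos j)
      have h1 : Filter.Tendsto (fun j : ℕ => ((j:ℝ) + 2)) Filter.atTop Filter.atTop :=
        Filter.tendsto_atTop_add_const_right _ 2 tendsto_natCast_atTop_atTop
      have h2 := (tendsto_inv_atTop_zero.comp h1).const_mul x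
      simpa [div_eq_mul_inv, Function.comp] using h2
    have hball : ∀ᶠ j : ℕ in Filter.atTop,
        x ∈ Metric.closedBall x (1 * (x / ((j:ℝ) + 2))) :=
      Filter.Eventually.of_forall fun j => by
        simp [Metric.mem_closedBall, le_of_lt (hδpos j)]
    have htends := hx (fun _ => x) (fun j : ℕ => x / ((j:ℝ) + 2)) hδlim hball
    have havg : ∀ j : ℕ, (⨍ y in Metric.closedBall x (x / ((j:ℝ) + 2)), g0 y) ≤ 0 := by
      intro j
      set r := x / ((j:ℝ) + 2) with hrdef
      have hr0 : 0 < r := hδpos j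
      have hrx : r < x := hδlt j
      have hIcc : Metric.closedBall x r = Set.Icc (x - r) (x + r) := Real.closedBall_eq_Icc
      have hIint : (∫ y in Metric.closedBall x r, g0 y) ≤ 0 := by
        rw [hIcc, MeasureTheory.integral_Icc_eq_integral_Ioc,
          hg0def, setIntegral_indicator measurableSet_Ioi]
        have hss : Set.Ioc (x - r) (x + r) ∩ Set.Ioi 0 = Set.Ioc (x - r) (x + r) := by
          refine Set.inter_eq_left.mpr ?_
          intro y hy
          have : 0 < x - r := by linarith
          exact lt_of_lt_of_le this hy.1.le
        rw [hss, ← intervalIntegral.integral_of_le (by linarith : x - r ≤ x + r),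
          hsub (x - r) (x + r) (by linarith) (by linarith)]
        have := hmono (show (x - r : ℝ) ∈ Set.Ici (0:ℝ) by simp; linarith)
          (show (x + r : ℝ) ∈ Set.Ici (0:ℝ) by simp; linarith) (by linarith)
        linarith
      rw [setAverage_eq]
      rw [smul_eq_mul]
      exact mul_nonpos_iff.mpr (Or.inl ⟨by positivity, hIint⟩)
    have hlim : g0 x ≤ 0 := le_of_tendsto htends (Filter.Eventually.of_forall havg)
    rwa [hg0def, Set.indicator_of_mem hxpos] at hlim
  -- main part
  intro ω hω
  have hInt : IntegrableOn (fun ρ => χ ρ * Real.sin (ρ * ω)) (Set.Ioi (0:ℝ)) := by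
    refine Integrable.mono' (hint.norm.const_mul |ω|) ?_ ?_
    · exact hχm.mul ((Real.continuous_sin.comp (continuous_id.mul continuous_const)).aestronglyMeasurable)
    · filter_upwards [ae_restrict_mem measurableSet_Ioi] with ρ hρ
      have h1 : |Real.sin (ρ * ω)| ≤ |ρ * ω| := Real.abs_sin_le_abs
      have h2 : 0 ≤ χ ρ := hnn ρ (le_of_lt hρ)
      have h3 : 0 ≤ ρ * χ ρ := mul_nonneg (le_of_lt hρ) h2
      rw [norm_mul, Real.norm_eq_abs, Real.norm_eq_abs, Real.norm_eq_abs,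
        abs_of_nonneg h2, abs_of_nonneg h3]
      calc χ ρ * |Real.sin (ρ * ω)| ≤ χ ρ * (ρ * |ω|) := by
            refine mul_le_mul_of_nonneg_left ?_ h2
            calc |Real.sin (ρ * ω)| ≤ |ρ * ω| := h1
              _ = ρ * |ω| := by rw [abs_mul, abs_of_nonneg (le_of_lt hρ)]
        _ = |ω| * (ρ * χ ρ) := by ring
  refine ⟨hInt, ?_⟩
  -- the key identity via Fubini
  have hkey : (∫ ρ in Set.Ioi (0:ℝ), χ ρ * Real.sin (ρ * ω))
      = ∫ t in Set.Ioi (0:ℝ), (-g t) * ((1 - Real.cos (t * ω)) / ω) := by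
    have hhint : Integrable (fun t => -g t) (volume.restrict (Set.Ioi (0:ℝ))) := hg.neg
    have hχIoi : ∀ ρ : ℝ, 0 ≤ ρ → (∫ t in Set.Ioi ρ, -g t) = χ ρ := by
      intro ρ hρ
      rw [integral_neg, hIoiρ ρ hρ, neg_neg]
    have habs : ∀ᵐ t ∂(volume.restrict (Set.Ioi (0:ℝ))), |(-g t : ℝ)| = -g t := by
      filter_upwards [hgle] with t ht
      rw [abs_of_nonneg (by linarith)]
    set F : ℝ × ℝ → ℝ :=
      fun p => Real.sin (p.1 * ω) * (Set.Ioi p.1).indicator (fun t => -g t) p.2 with hFdef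
    have hFm : AEStronglyMeasurable F
        ((volume.restrict (Set.Ioi (0:ℝ))).prod (volume.restrict (Set.Ioi (0:ℝ)))) := by
      have hFalt : F = fun p : ℝ × ℝ => (Real.sin (p.1 * ω) * (-g p.2)) *
          ({q : ℝ × ℝ | q.1 < q.2}.indicator (fun _ => (1:ℝ)) p) := by
        funext p
        by_cases hp : p.1 < p.2
        · simp only [hFdef, Set.indicator_of_mem, hp, Set.mem_Ioi, Set.mem_setOf_eq,
            Set.indicator_of_mem, mul_one]
        · simp only [hFdef, Set.indicator_of_notMem, hp, Set.mem_Ioi, Set.mem_setOf_eq,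
            not_false_iff, mul_zero, Set.indicator_of_notMem]
      rw [hFalt]
      refine AEStronglyMeasurable.mul ?_ ?_
      · exact ((Real.continuous_sin.comp
          (continuous_fst.mul continuous_const)).aestronglyMeasurable).mul
          (hhint.aestronglyMeasurable.comp_snd)
      · exact (stronglyMeasurable_const.indicator
          (measurableSet_lt measurable_fst measurable_snd)).aestronglyMeasurable
    have hinter : ∀ ρ : ℝ, 0 ≤ ρ → Set.Ioi (0:ℝ) ∩ Set.Ioi ρ = Set.Ioi ρ := by
      intro ρ hρ
      rw [Set.Ioi_inter_Ioi, max_eq_right hρ]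
    have hF1 : ∀ ρ : ℝ, 0 < ρ →
        (∫ t, F (ρ, t) ∂(volume.restrict (Set.Ioi (0:ℝ)))) = Real.sin (ρ * ω) * χ ρ := by
      intro ρ hρ
      simp only [hFdef]
      rw [integral_const_mul, setIntegral_indicator measurableSet_Ioi,
        hinter ρ (le_of_lt hρ), hχIoi ρ (le_of_lt hρ)]
    have hF1n : ∀ ρ : ℝ, 0 < ρ →
        (∫ t, ‖F (ρ, t)‖ ∂(volume.restrict (Set.Ioi (0:ℝ)))) = |Real.sin (ρ * ω)| * χ ρ := by
      intro ρ hρ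
      have hptw : ∀ t : ℝ, ‖F (ρ, t)‖
          = |Real.sin (ρ * ω)| * (Set.Ioi ρ).indicator (fun t => |(-g t : ℝ)|) t := by
        intro t
        by_cases ht : ρ < t
        · simp only [hFdef, Real.norm_eq_abs, Set.indicator_of_mem, ht, Set.mem_Ioi, abs_mul]
        · simp only [hFdef, Real.norm_eq_abs, Set.indicator_of_notMem, ht, Set.mem_Ioi,
            not_false_iff, mul_zero, abs_zero]
      rw [integral_congr_ae (Filter.Eventually.of_forall hptw), integral_const_mul,
        setIntegral_indicator measurableSet_Ioi, hinter ρ (le_of_lt hρ)]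
      have habsρ : ∀ᵐ t ∂(volume.restrict (Set.Ioi ρ)), |(-g t : ℝ)| = -g t :=
        ae_restrict_of_ae_restrict_of_subset (Set.Ioi_subset_Ioi (le_of_lt hρ)) habs
      rw [integral_congr_ae habsρ, hχIoi ρ (le_of_lt hρ)]
    have hFint : Integrable F
        ((volume.restrict (Set.Ioi (0:ℝ))).prod (volume.restrict (Set.Ioi (0:ℝ)))) := by
      rw [integrable_prod_iff hFm]
      constructor
      · refine Filter.Eventually.of_forall fun ρ => ?_
        simp only [hFdef]
        exact (hhint.indicator measurableSet_Ioi).const_mul _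
      · refine Integrable.mono' (hint.norm.const_mul |ω|) (hFm.norm.integral_prod_right') ?_
        filter_upwards [ae_restrict_mem measurableSet_Ioi] with ρ hρ
        have hρ' : (0:ℝ) < ρ := hρ
        rw [Real.norm_eq_abs, hF1n ρ hρ']
        have h2 : 0 ≤ χ ρ := hnn ρ (le_of_lt hρ')
        rw [abs_of_nonneg (mul_nonneg (abs_nonneg _) h2), Real.norm_eq_abs,
          abs_of_nonneg (mul_nonneg (le_of_lt hρ') h2)]
        calc |Real.sin (ρ * ω)| * χ ρ ≤ (ρ * |ω|) * χ ρ := by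
              refine mul_le_mul_of_nonneg_right ?_ h2
              calc |Real.sin (ρ * ω)| ≤ |ρ * ω| := Real.abs_sin_le_abs
                _ = ρ * |ω| := by rw [abs_mul, abs_of_nonneg (le_of_lt hρ')]
          _ = |ω| * (ρ * χ ρ) := by ring
    have hswap := MeasureTheory.integral_integral_swap
      (μ := volume.restrict (Set.Ioi (0:ℝ))) (ν := volume.restrict (Set.Ioi (0:ℝ)))
      (f := fun ρ t => F (ρ, t)) hFint
    calc (∫ ρ in Set.Ioi (0:ℝ), χ ρ * Real.sin (ρ * ω))
        = ∫ ρ in Set.Ioi (0:ℝ), (∫ t, F (ρ, t) ∂(volume.restrict (Set.Ioi (0:ℝ)))) := by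
          refine integral_congr_ae ?_
          filter_upwards [ae_restrict_mem measurableSet_Ioi] with ρ hρ
          rw [hF1 ρ hρ, mul_comm]
      _ = ∫ t in Set.Ioi (0:ℝ), (∫ ρ in Set.Ioi (0:ℝ), F (ρ, t)) := hswap
      _ = ∫ t in Set.Ioi (0:ℝ), (-g t) * ((1 - Real.cos (t * ω)) / ω) := by
          refine integral_congr_ae ?_
          filter_upwards [ae_restrict_mem measurableSet_Ioi] with t ht
          have ht' : (0:ℝ) < t := ht
          have h1 : (fun ρ => F (ρ, t))
              = fun ρ => (Set.Iio t).indicator (fun ρ => Real.sin (ρ * ω) * (-g t)) ρ := by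
            funext ρ
            by_cases hρt : ρ < t
            · simp only [hFdef, Set.indicator_of_mem, hρt, Set.mem_Ioi, Set.mem_Iio]
            · simp only [hFdef, Set.indicator_of_notMem, hρt, Set.mem_Ioi, Set.mem_Iio,
                not_false_iff, mul_zero]
          rw [h1, setIntegral_indicator measurableSet_Iio, Set.Ioi_inter_Iio,
            integral_mul_const]
          have h3 : (∫ ρ in Set.Ioo (0:ℝ) t, Real.sin (ρ * ω))
              = (1 - Real.cos (t * ω)) / ω := by
            rw [setIntegral_congr_set (MeasureTheory.Ioo_ae_eq_Ioc),
              ← intervalIntegral.integral_of_le (le_of_lt ht'),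
              intervalIntegral.integral_comp_mul_right Real.sin hω, integral_sin,
              smul_eq_mul, zero_mul, Real.cos_zero]
            ring
          rw [h3]
          ring
  -- positivity of the final integral
  have hJint : IntegrableOn (fun t => (-g t) * (1 - Real.cos (t * ω))) (Set.Ioi (0:ℝ)) := by
    refine Integrable.mono' (hg.norm.const_mul 2) ?_ ?_
    · exact (hg.aestronglyMeasurable.neg.mul
        ((continuous_const.sub (Real.continuous_cos.comp (continuous_id.mul continuous_const))).aestronglyMeasurable))
    · refine Filter.Eventually.of_forall fun t => ?_
      rw [norm_mul, Real.norm_eq_abs, Real.norm_eq_abs, Real.norm_eq_abs, abs_neg]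
      have h1 : |1 - Real.cos (t * ω)| ≤ 2 := by
        rw [abs_le]
        constructor <;> nlinarith [Real.cos_le_one (t * ω), Real.neg_one_le_cos (t * ω)]
      calc |g t| * |1 - Real.cos (t * ω)| ≤ |g t| * 2 :=
            mul_le_mul_of_nonneg_left h1 (abs_nonneg _)
        _ = 2 * |g t| := by ring
  have hJnn : 0 ≤ᵐ[volume.restrict (Set.Ioi (0:ℝ))]
      fun t => (-g t) * (1 - Real.cos (t * ω)) := by
    filter_upwards [hgle] with t ht
    exact mul_nonneg (by linarith) (by nlinarith [Real.cos_le_one (t * ω)])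
  have hJpos : 0 < ∫ t in Set.Ioi (0:ℝ), (-g t) * (1 - Real.cos (t * ω)) := by
    rcases lt_or_eq_of_le (integral_nonneg_of_ae hJnn) with h | h
    · exact h
    · exfalso
      have hz := (integral_eq_zero_iff_of_nonneg_ae hJnn hJint).mp h.symm
      -- a.e. cos (t ω) ≠ 1
      have hcnull : ∀ᵐ t ∂(volume.restrict (Set.Ioi (0:ℝ))), Real.cos (t * ω) ≠ 1 := by
        have hSn : volume {t : ℝ | Real.cos (t * ω) = 1} = 0 := by
          refine measure_mono_null ?_
            ((Set.countable_range fun n : ℤ => ((n : ℝ) * (2 * Real.pi)) / ω).measure_zero _)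
          intro t ht
          obtain ⟨n, hn⟩ := (Real.cos_eq_one_iff _).mp ht
          exact ⟨n, by show (n:ℝ) * (2 * Real.pi) / ω = t; rw [hn, mul_div_assoc, div_self hω, mul_one]⟩
        refine ae_restrict_of_ae ?_
        rw [ae_iff]
        convert hSn using 2
        simp only [not_not]
      have hg0 : ∀ᵐ t ∂(volume.restrict (Set.Ioi (0:ℝ))), g t = 0 := by
        filter_upwards [hz, hcnull] with t h1 h2
        have h3 : (1 - Real.cos (t * ω)) ≠ 0 := fun hc => h2 (by linarith)
        have := mul_eq_zero.mp h1
        rcases this with h | h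
        · linarith [neg_eq_zero.mp h]
        · exact absurd h h3
      have : (∫ t in Set.Ioi (0:ℝ), g t) = 0 := by
        rw [integral_congr_ae hg0]; simp
      rw [hI] at this; norm_num at this
  rw [hkey]
  have hrw : (∫ t in Set.Ioi (0:ℝ), (-g t) * ((1 - Real.cos (t * ω)) / ω))
      = (∫ t in Set.Ioi (0:ℝ), (-g t) * (1 - Real.cos (t * ω))) * ω⁻¹ := by
    rw [← integral_mul_const]
    congr 1; ext t; ring
  rw [hrw]
  have hfin : (1/ω) * ((∫ t in Set.Ioi (0:ℝ), (-g t) * (1 - Real.cos (t * ω))) * ω⁻¹)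
      = (∫ t in Set.Ioi (0:ℝ), (-g t) * (1 - Real.cos (t * ω))) * (ω⁻¹ * ω⁻¹) := by
    ring
  rw [hfin]
  exact mul_pos hJpos (mul_self_pos.mpr (inv_ne_zero hω))
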